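/- Let T be an unrooted binary phylogenetic X-tree and let U be a 3-cuttable unrooted binary phylogenetic network on X that is not simple. Let e = {u,v} be a non-trivial cut-edge of U inducing the split X₁|X₂, and suppose T has an edge e' = {u',v'} inducing the same split X₁|X₂. Let U₁ and U₂ be obtained from U by deleting e and adding new leaf edges {u,x₁} and {v,x₂} with new labels x₁, x₂ ∉ X, and let T₁ and T₂ be obtained from T by deleting e' and adding new leaf edges {u',x₁} and {v',x₂}, where T₁ and U₁ have leaf set X₁∪{x₁} and T₂ and U₂ have leaf set X₂∪{x₂}. Then U displays T if and only if U₁ displays T₁ and U₂ displays T₂. -/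

import Mathlib

/-- A graph with an explicit vertex set inside an ambient type `V`. -/
structure Net (V : Type) where
  verts : Set V
  graph : SimpleGraph V
  support : ∀ ⦃a b : V⦄, graph.Adj a b → a ∈ verts ∧ b ∈ verts

namespace Net

variable {V : Type}

/-- The degree of a vertex. -/
noncomputable def deg (N : Net V) (v : V) : ℕ := (N.graph.neighborSet v).ncard

/-- `N` is connected (as a graph on its vertex set `N.verts`). -/
def ConnectedOn (N : Net V) : Prop :=
  N.verts.Nonempty ∧ ∀ a ∈ N.verts, ∀ b ∈ N.verts, N.graph.Reachable a b

/-- The set of leaves (degree-1 vertices). -/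
def leaves (N : Net V) : Set V := {v | v ∈ N.verts ∧ N.deg v = 1}

/-- `N` is an unrooted binary phylogenetic network on the (label) set `X`:
it is simple (automatic for `SimpleGraph`), connected, every vertex has degree 1 or 3,
and the degree-1 vertices are exactly the elements of `X` (we identify each leaf with
its label). -/
def IsUBPN (N : Net V) (X : Set V) : Prop :=
  N.ConnectedOn ∧ (∀ v ∈ N.verts, N.deg v = 1 ∨ N.deg v = 3) ∧ N.leaves = X

/-- Deleting a set of edges. -/
def deleteEdges (N : Net V) (D : Set (Sym2 V)) : Net V where
  verts := N.verts
  graph := N.graph.deleteEdges D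
  support := fun _ _ h => N.support ((SimpleGraph.deleteEdges_adj.mp h).1)

/-- A cut-edge: an edge whose deletion disconnects the network. -/
def IsCutEdge (N : Net V) (e : Sym2 V) : Prop :=
  e ∈ N.graph.edgeSet ∧ ¬ (N.deleteEdges {e}).ConnectedOn

/-- `N` is `q`-cuttable: every cycle contains a path of at least `q` vertices
each of which is incident to a cut-edge. -/
def QCuttable (N : Net V) (q : ℕ) : Prop :=
  ∀ ⦃r : V⦄ (C : N.graph.Walk r r), C.IsCycle →
    ∃ (x y : V) (P : N.graph.Walk x y), P.IsPath ∧ q ≤ P.support.length ∧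
      (∀ v ∈ P.support, v ∈ C.support) ∧ (∀ e ∈ P.edges, e ∈ C.edges) ∧
      ∀ v ∈ P.support, ∃ e, N.IsCutEdge e ∧ v ∈ e

end Net

namespace Net

variable {V : Type}

/-- The edge `e` of `N` induces the `X`-split `X₁ | X₂`: `(X₁, X₂)` is a partition of `X`
into two nonempty parts and every path in `N` between a leaf in `X₁` and a leaf in `X₂`
passes through `e`. -/
def InducesSplit (N : Net V) (X : Set V) (e : Sym2 V) (X₁ X₂ : Set V) : Prop :=
  X₁.Nonempty ∧ X₂.Nonempty ∧ X₁ ∩ X₂ = ∅ ∧ X₁ ∪ X₂ = X ∧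
  ∀ x ∈ X₁, ∀ y ∈ X₂, ∀ P : N.graph.Walk x y, P.IsPath → e ∈ P.edges

end Net

namespace Net

variable {V : Type}

/-- `T` is an unrooted binary phylogenetic `X`-tree: an unrooted binary phylogenetic
network on `X` with no cycles. -/
def IsTree (T : Net V) (X : Set V) : Prop := T.IsUBPN X ∧ T.graph.IsAcyclic

/-- `(fv, fe)` is an embedding of the tree `T` in the network `U` (both with label set
`X`): `fv` maps vertices of `T` to vertices of `U` fixing the leaves, injectively, and
`fe` maps each edge of `T` to a path in `U` between the images of its endpoints, the
paths of distinct edges being pairwise edge-disjoint. -/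
def IsEmbedding (T U : Net V) (X : Set V) (fv : V → V)
    (fe : ∀ ⦃a b : V⦄, T.graph.Adj a b → U.graph.Walk (fv a) (fv b)) : Prop :=
  (∀ a ∈ T.verts, fv a ∈ U.verts) ∧
  (∀ x ∈ X, fv x = x) ∧
  (∀ a ∈ T.verts, ∀ b ∈ T.verts, fv a = fv b → a = b) ∧
  (∀ ⦃a b : V⦄ (h : T.graph.Adj a b), (fe h).IsPath) ∧
  (∀ ⦃a b c d : V⦄ (h : T.graph.Adj a b) (h' : T.graph.Adj c d), s(a, b) ≠ s(c, d) →
    ∀ e ∈ (fe h).edges, e ∉ (fe h').edges)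

/-- `U` displays `T`: there is an embedding of `T` in `U` (equivalently, a subgraph of
`U` is a subdivision of `T`). -/
def Displays (U T : Net V) (X : Set V) : Prop :=
  ∃ (fv : V → V) (fe : ∀ ⦃a b : V⦄, T.graph.Adj a b → U.graph.Walk (fv a) (fv b)),
    IsEmbedding T U X fv fe

end Net

namespace Net

variable {V : Type}

/-- `N` is simple: every cut-edge of `N` is incident to a leaf. -/
def Simple (N : Net V) (X : Set V) : Prop :=
  ∀ e, N.IsCutEdge e → ∃ x ∈ X, x ∈ e

end Net

open Net


open SimpleGraph Walk
variable {V : Type}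

lemma concat_isPath {G : SimpleGraph V} {a b c : V} {p : G.Walk a b} (h : G.Adj b c)
    (hp : p.IsPath) (hc : c ∉ p.support) : (p.concat h).IsPath := by
  rw [← Walk.isPath_reverse_iff, Walk.reverse_concat, Walk.cons_isPath_iff]
  exact ⟨hp.reverse, by simpa using hc⟩

lemma walk_avoid_reach {G : SimpleGraph V} {e : Sym2 V} {a b : V} (p : G.Walk a b)
    (h : e ∉ p.edges) : (G.deleteEdges {e}).Reachable a b := by
  refine ⟨p.transfer _ fun f hf => ?_⟩
  rw [edgeSet_deleteEdges]
  exact ⟨p.edges_subset_edgeSet hf, fun hm => h (by simpa using hm ▸ hf)⟩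

lemma side_total' {G : SimpleGraph V} {u v : V} : ∀ {a c : V}, (p : G.Walk a c) →
    ((G.deleteEdges {s(u,v)}).Reachable u c ∨ (G.deleteEdges {s(u,v)}).Reachable v c) →
    ((G.deleteEdges {s(u,v)}).Reachable u a ∨ (G.deleteEdges {s(u,v)}).Reachable v a) := by
  intro a c p
  induction p with
  | nil => exact id
  | @cons a w _ h q ih =>
    intro hc
    by_cases hs : s(a, w) = s(u, v)
    · rcases Sym2.eq_iff.mp hs with ⟨ha, -⟩ | ⟨ha, -⟩
      · left; rw [ha]
      · right; rw [ha]
    · have hadj : (G.deleteEdges {s(u,v)}).Adj a w := by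
        rw [deleteEdges_adj]; exact ⟨h, by simpa using hs⟩
      rcases ih hc with h1 | h1
      · exact Or.inl (h1.trans hadj.symm.reachable)
      · exact Or.inr (h1.trans hadj.symm.reachable)

lemma side_total {G : SimpleGraph V} {u v a : V} (p : G.Walk a u) :
    (G.deleteEdges {s(u,v)}).Reachable u a ∨ (G.deleteEdges {s(u,v)}).Reachable v a :=
  side_total' p (Or.inl (Reachable.refl _))

lemma cross_flip {G : SimpleGraph V} {u v a b : V} (p : G.Walk a b) (hp : p.IsPath)
    (he : s(u,v) ∈ p.edges) (hsep : ¬ (G.deleteEdges {s(u,v)}).Reachable u v) :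
    ¬ ((G.deleteEdges {s(u,v)}).Reachable u a ↔ (G.deleteEdges {s(u,v)}).Reachable u b) := by
  induction p with
  | nil => simp at he
  | @cons a w _ h q ih =>
    rw [Walk.edges_cons, List.mem_cons] at he
    have hq : q.IsPath := ((Walk.cons_isPath_iff h q).mp hp).1
    rcases he with he | he
    · have hq' : s(u,v) ∉ q.edges := by
        intro hmem
        have hnd := hp.edges_nodup
        rw [Walk.edges_cons, ← he] at hnd
        exact (List.nodup_cons.mp hnd).1 hmem
      have hwb := walk_avoid_reach q hq'
      rcases Sym2.eq_iff.mp he with ⟨ha, hw⟩ | ⟨ha, hw⟩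
      · subst ha; subst hw
        intro hiff
        exact hsep ((hiff.mp (Reachable.refl _)).trans hwb.symm)
      · subst ha; subst hw
        intro hiff
        exact hsep (hiff.mpr hwb)
    · have hs : s(a, w) ≠ s(u, v) := by
        intro hcontra
        have hnd := hp.edges_nodup
        rw [Walk.edges_cons] at hnd
        exact (List.nodup_cons.mp hnd).1 (hcontra ▸ he)
      have hadj : (G.deleteEdges {s(u,v)}).Adj a w := by
        rw [deleteEdges_adj]; exact ⟨h, by simpa using hs⟩
      have hiff1 : (G.deleteEdges {s(u,v)}).Reachable u a ↔ (G.deleteEdges {s(u,v)}).Reachable u w :=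
        ⟨fun hr => hr.trans hadj.reachable, fun hr => hr.trans hadj.symm.reachable⟩
      intro hiff
      exact ih hq he (hiff1.symm.trans hiff)

lemma support_side {G : SimpleGraph V} {e : Sym2 V} {a b : V} (p : G.Walk a b)
    (h : e ∉ p.edges) : ∀ w ∈ p.support, (G.deleteEdges {e}).Reachable a w := by
  induction p with
  | nil => intro w hw; rw [Walk.support_nil, List.mem_singleton] at hw; subst hw; rfl
  | @cons a c _ hadj q ih =>
    intro w hw
    rw [Walk.edges_cons, List.mem_cons] at h
    push_neg at h
    have hadj' : (G.deleteEdges {e}).Adj a c := by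
      rw [deleteEdges_adj]; exact ⟨hadj, by simpa using (Ne.symm h.1)⟩
    rw [Walk.support_cons, List.mem_cons] at hw
    rcases hw with rfl | hw
    · rfl
    · exact hadj'.reachable.trans (ih h.2 w hw)

/-- Split a path at an occurrence of the edge `s(u,v)`. -/
lemma split_at_edge {G : SimpleGraph V} {u v : V} : ∀ {a b : V} (p : G.Walk a b), p.IsPath →
    s(u,v) ∈ p.edges →
    ∃ (w z : V) (q : G.Walk a w) (r : G.Walk z b),
      ((w = u ∧ z = v) ∨ (w = v ∧ z = u)) ∧ q.IsPath ∧ r.IsPath ∧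
      s(u,v) ∉ q.edges ∧ s(u,v) ∉ r.edges ∧
      (∀ f ∈ q.edges, f ∈ p.edges) ∧ (∀ f ∈ r.edges, f ∈ p.edges) ∧
      (∀ w' ∈ q.support, w' ∈ p.support) ∧ (∀ w' ∈ r.support, w' ∈ p.support) := by
  intro a b p
  induction p with
  | nil => intro _ he; simp at he
  | @cons a w b h q ih =>
    intro hp he
    have hq : q.IsPath := ((Walk.cons_isPath_iff h q).mp hp).1
    rw [Walk.edges_cons, List.mem_cons] at he
    rcases he with he | he
    · have hq' : s(u,v) ∉ q.edges := by
        intro hmem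
        have hnd := hp.edges_nodup
        rw [Walk.edges_cons, ← he] at hnd
        exact (List.nodup_cons.mp hnd).1 hmem
      rcases Sym2.eq_iff.mp he.symm with ⟨hu, hv⟩ | ⟨hu, hv⟩
      · refine ⟨a, w, Walk.nil, q, Or.inl ⟨hu, hv⟩, Walk.IsPath.nil, hq, by simp, hq', by simp, ?_, by simp, ?_⟩
        · intro f hf; rw [Walk.edges_cons]; exact List.mem_cons_of_mem _ hf
        · intro w' hw'; rw [Walk.support_cons]; exact List.mem_cons_of_mem _ hw'
      · refine ⟨a, w, Walk.nil, q, Or.inr ⟨hu, hv⟩, Walk.IsPath.nil, hq, by simp, hq', by simp, ?_, by simp, ?_⟩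
        · intro f hf; rw [Walk.edges_cons]; exact List.mem_cons_of_mem _ hf
        · intro w' hw'; rw [Walk.support_cons]; exact List.mem_cons_of_mem _ hw'
    · obtain ⟨w', z, q', r, hwz, hq'p, hrp, hq'e, hre, hq'sub, hrsub, hq'supp, hrsupp⟩ := ih hq he
      have hnotin : a ∉ q'.support := fun hmem =>
        ((Walk.cons_isPath_iff h q).mp hp).2 (hq'supp a hmem)
      refine ⟨w', z, Walk.cons h q', r, hwz, ?_, hrp, ?_, hre, ?_, ?_, ?_, ?_⟩
      · rw [Walk.cons_isPath_iff]; exact ⟨hq'p, hnotin⟩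
      · rw [Walk.edges_cons, List.mem_cons]
        rintro (hc | hc)
        · have hnd := hp.edges_nodup
          rw [Walk.edges_cons, ← hc] at hnd
          exact (List.nodup_cons.mp hnd).1 he
        · exact hq'e hc
      · intro f hf
        rw [Walk.edges_cons, List.mem_cons] at hf ⊢
        rcases hf with hf | hf
        · exact Or.inl hf
        · exact Or.inr (hq'sub f hf)
      · intro f hf; rw [Walk.edges_cons]; exact List.mem_cons_of_mem _ (hrsub f hf)
      · intro w'' hw''
        rw [Walk.support_cons, List.mem_cons] at hw'' ⊢
        rcases hw'' with hw'' | hw''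
        · exact Or.inl hw''
        · exact Or.inr (hq'supp _ hw'')
      · intro w'' hw''; rw [Walk.support_cons]; exact List.mem_cons_of_mem _ (hrsupp _ hw'')

/-- an internal vertex of a path has two distinct neighbors on the path. -/
lemma internal_two_neighbors {G : SimpleGraph V} : ∀ {a b : V} (p : G.Walk a b), p.IsPath →
    ∀ w ∈ p.support, w ≠ a → w ≠ b →
    ∃ t₁ t₂, t₁ ≠ t₂ ∧ G.Adj w t₁ ∧ G.Adj w t₂ ∧ t₁ ∈ p.support ∧ t₂ ∈ p.support := by
  intro a b p
  induction p with
  | nil => intro _ w hw hwa _; rw [Walk.support_nil, List.mem_singleton] at hw; exact absurd hw hwa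
  | @cons a c b h q ih =>
    intro hp w hw hwa hwb
    have hq : q.IsPath := ((Walk.cons_isPath_iff h q).mp hp).1
    rw [Walk.support_cons, List.mem_cons] at hw
    rcases hw with rfl | hw
    · exact absurd rfl hwa
    · by_cases hwc : w = c
      · subst hwc
        -- neighbors: a (via h) and the next vertex of q
        cases q with
        | nil => exact absurd rfl hwb
        | @cons _ d _ h2 q2 =>
          refine ⟨a, d, ?_, h.symm, h2, by simp, by simp⟩
          intro had
          subst had
          exact ((Walk.cons_isPath_iff h _).mp hp).2 (by simp)
      · obtain ⟨t₁, t₂, hne, h1, h2, hs1, hs2⟩ := ih hq w hw hwc hwb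
        exact ⟨t₁, t₂, hne, h1, h2, by rw [Walk.support_cons]; exact List.mem_cons_of_mem _ hs1,
          by rw [Walk.support_cons]; exact List.mem_cons_of_mem _ hs2⟩

lemma loop_path_nil {G : SimpleGraph V} {r : V} (p : G.Walk r r) (hp : p.IsPath) : p.length = 0 := by
  cases p with
  | nil => rfl
  | cons h q => exact absurd (q.end_mem_support) ((Walk.cons_isPath_iff h q).mp hp).2

lemma unique_end_nbr {G : SimpleGraph V} {a b : V} (p : G.Walk b a) (hp : p.IsPath)
    {t₁ t₂ : V} (h1 : s(t₁, b) ∈ p.edges) (h2 : s(t₂, b) ∈ p.edges) : t₁ = t₂ := by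
  cases p with
  | nil => simp at h1
  | @cons _ w _ h q =>
    have key : ∀ t, s(t, b) ∈ (Walk.cons h q).edges → t = w := by
      intro t ht
      have hadj : G.Adj t b := (mem_edgeSet _).mp ((Walk.cons h q).edges_subset_edgeSet ht)
      rw [Walk.edges_cons, List.mem_cons] at ht
      rcases ht with ht | ht
      · rcases Sym2.eq_iff.mp ht with ⟨htb, -⟩ | ⟨htw, -⟩
        · exact absurd htb hadj.ne
        · exact htw
      · exact absurd (q.snd_mem_support_of_mem_edges ht) ((Walk.cons_isPath_iff h q).mp hp).2
    rw [key t₁ h1, key t₂ h2]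

/-- In an acyclic graph, a neighbor of the endpoint of a path lying on the path
must be joined to the endpoint by an edge of the path. -/
lemma acyclic_end_nbr_edge {G : SimpleGraph V} (hG : G.IsAcyclic) {a b t : V}
    (p : G.Walk a b) (hp : p.IsPath) (hadj : G.Adj b t) (ht : t ∈ p.support) :
    s(t, b) ∈ p.edges := by
  classical
  by_contra hne
  have hq : (p.dropUntil t ht).IsPath := hp.dropUntil ht
  have hqe : s(b, t) ∉ (p.dropUntil t ht).edges := by
    intro hmem
    exact hne (by rw [Sym2.eq_swap] at hmem; exact p.edges_dropUntil_subset ht hmem)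
  exact hG _ ((Walk.cons_isCycle_iff (p.dropUntil t ht) hadj).mpr ⟨hq, hqe⟩)

/-- extend a path inside `S` when its endpoint has two neighbours in `S`. -/
lemma path_extend {G : SimpleGraph V} (hG : G.IsAcyclic) {S : Set V} {r b : V}
    (p : G.Walk r b) (hp : p.IsPath) (hsupp : ∀ w ∈ p.support, w ∈ S)
    {t₁ t₂ : V} (hne : t₁ ≠ t₂) (ht₁ : t₁ ∈ S) (ht₂ : t₂ ∈ S)
    (h1 : G.Adj b t₁) (h2 : G.Adj b t₂) :
    ∃ (c : V) (q : G.Walk r c), q.IsPath ∧ (∀ w ∈ q.support, w ∈ S) ∧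
      q.length = p.length + 1 := by
  have key : ∃ t, (G.Adj b t) ∧ t ∈ S ∧ t ∉ p.support := by
    by_cases hm1 : t₁ ∈ p.support
    · by_cases hm2 : t₂ ∈ p.support
      · exact absurd (unique_end_nbr p.reverse hp.reverse
          (by rw [Walk.edges_reverse]; exact List.mem_reverse.mpr (acyclic_end_nbr_edge hG p hp h1 hm1))
          (by rw [Walk.edges_reverse]; exact List.mem_reverse.mpr (acyclic_end_nbr_edge hG p hp h2 hm2))) hne
      · exact ⟨t₂, h2, ht₂, hm2⟩
    · exact ⟨t₁, h1, ht₁, hm1⟩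
  obtain ⟨t, hadj, htS, htm⟩ := key
  refine ⟨t, p.concat hadj, concat_isPath hadj hp htm, ?_, p.length_concat hadj⟩
  intro w hw
  rw [Walk.support_concat] at hw
  rw [List.mem_append] at hw
  rcases hw with hw | hw
  · exact hsupp w hw
  · rw [List.mem_singleton] at hw; subst hw; exact htS

/-- No set in a finite acyclic graph can have min-degree two except one vertex of degree one. -/
lemma acyclic_no_core [Fintype V] {G : SimpleGraph V} (hG : G.IsAcyclic) (S : Set V) (r : V)
    (hr : r ∈ S) (hrnb : ∃ t, G.Adj r t ∧ t ∈ S)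
    (hdeg : ∀ s ∈ S, s ≠ r → ∃ t₁ t₂, t₁ ≠ t₂ ∧ t₁ ∈ S ∧ t₂ ∈ S ∧ G.Adj s t₁ ∧ G.Adj s t₂) :
    False := by
  obtain ⟨t, hadj, htS⟩ := hrnb
  have key : ∀ n : ℕ, ∃ (c : V) (p : G.Walk r c), p.IsPath ∧ (∀ w ∈ p.support, w ∈ S) ∧
      p.length = n + 1 := by
    intro n
    induction n with
    | zero =>
      refine ⟨t, Walk.cons hadj Walk.nil, ?_, ?_, rfl⟩
      · rw [Walk.cons_isPath_iff]; exact ⟨Walk.IsPath.nil, by simp [hadj.ne]⟩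
      · intro w hw
        simp only [Walk.support_cons, Walk.support_nil, List.mem_cons,
          List.mem_singleton, List.not_mem_nil, or_false] at hw
        rcases hw with rfl | rfl
        · exact hr
        · exact htS
    | succ n ih =>
      obtain ⟨c, p, hp, hsupp, hlen⟩ := ih
      have hcr : c ≠ r := by
        intro hcr
        subst hcr
        have := loop_path_nil p hp
        omega
      obtain ⟨t₁, t₂, hne, ht₁, ht₂, h1, h2⟩ := hdeg c (hsupp c p.end_mem_support) hcr
      obtain ⟨c', q, hq, hqsupp, hqlen⟩ := path_extend hG p hp hsupp hne ht₁ ht₂ h1 h2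
      exact ⟨c', q, hq, hqsupp, by omega⟩
  obtain ⟨c, p, hp, -, hlen⟩ := key (Fintype.card V)
  have := hp.length_lt
  omega

lemma support_reach {G : SimpleGraph V} {a b : V} (p : G.Walk a b) :
    ∀ w ∈ p.support, G.Reachable a w := by
  induction p with
  | nil =>
    intro w hw; rw [Walk.support_nil, List.mem_singleton] at hw; subst hw
    exact Reachable.refl _
  | cons h q ih =>
    intro w hw
    rw [Walk.support_cons, List.mem_cons] at hw
    rcases hw with rfl | hw
    · rfl
    · exact h.reachable.trans (ih w hw)

lemma transfer_isPath {G H : SimpleGraph V} {a b : V} (p : G.Walk a b)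
    (hp : ∀ e ∈ p.edges, e ∈ H.edgeSet) (h : p.IsPath) : (p.transfer H hp).IsPath := by
  rw [Walk.isPath_def, Walk.support_transfer]; exact (Walk.isPath_def p).mp h

/-- pick an element of `{t₁,t₂,t₃}` (pairwise distinct) avoiding two values -/
lemma pick_avoid2 {t₁ t₂ t₃ x y : V} (h12 : t₁ ≠ t₂) (h13 : t₁ ≠ t₃) (h23 : t₂ ≠ t₃) :
    ∃ t, (t = t₁ ∨ t = t₂ ∨ t = t₃) ∧ t ≠ x ∧ t ≠ y := by
  by_cases e1x : t₁ = x
  · by_cases e2y : t₂ = y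
    · exact ⟨t₃, Or.inr (Or.inr rfl), fun h => h13 (h.trans e1x.symm ▸ rfl) , fun h => h23 (h.trans e2y.symm ▸ rfl)⟩
    · by_cases e2x : t₂ = x
      · exact absurd (e2x.trans e1x.symm) h12.symm
      · exact ⟨t₂, Or.inr (Or.inl rfl), e2x, e2y⟩
  · by_cases e1y : t₁ = y
    · by_cases e2x : t₂ = x
      · by_cases e3 : t₃ = y
        · exact absurd (e3.trans e1y.symm) h13.symm
        · by_cases e3x : t₃ = x
          · exact absurd (e3x.trans e2x.symm) h23.symm
          · exact ⟨t₃, Or.inr (Or.inr rfl), e3x, e3⟩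
      · by_cases e2y : t₂ = y
        · exact absurd (e2y.trans e1y.symm) h12.symm
        · exact ⟨t₂, Or.inr (Or.inl rfl), e2x, e2y⟩
    · exact ⟨t₁, Or.inl rfl, e1x, e1y⟩

/-- pick two distinct elements of `{t₁,t₂,t₃}` avoiding one value -/
lemma pick2_avoid1 {t₁ t₂ t₃ x : V} (h12 : t₁ ≠ t₂) (h13 : t₁ ≠ t₃) (h23 : t₂ ≠ t₃) :
    ∃ s t, s ≠ t ∧ (s = t₁ ∨ s = t₂ ∨ s = t₃) ∧ (t = t₁ ∨ t = t₂ ∨ t = t₃) ∧ s ≠ x ∧ t ≠ x := by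
  by_cases e1 : t₁ = x
  · refine ⟨t₂, t₃, h23, Or.inr (Or.inl rfl), Or.inr (Or.inr rfl), ?_, ?_⟩
    · exact fun h => h12.symm (h.trans e1.symm)
    · exact fun h => h13.symm (h.trans e1.symm)
  · by_cases e2 : t₂ = x
    · refine ⟨t₁, t₃, h13, Or.inl rfl, Or.inr (Or.inr rfl), e1, ?_⟩
      exact fun h => h23.symm (h.trans e2.symm)
    · exact ⟨t₁, t₂, h12, Or.inl rfl, Or.inr (Or.inl rfl), e1, e2⟩

lemma end_has_nbr {G : SimpleGraph V} : ∀ {c w : V} (p : G.Walk c w), c ≠ w → ∃ t, G.Adj t w := by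
  intro c w p
  induction p with
  | nil => exact fun h => absurd rfl h
  | @cons a t w h q ih =>
    intro _
    by_cases htw : t = w
    · subst htw; exact ⟨a, h⟩
    · exact ih htw

open Net in
lemma net_support_mem (N : Net V) {a b : V} (p : N.graph.Walk a b) :
    a ∈ N.verts → ∀ w ∈ p.support, w ∈ N.verts := by
  induction p with
  | nil =>
    intro ha w hw
    rw [Walk.support_nil, List.mem_singleton] at hw; subst hw; exact ha
  | @cons a c _ h pq ih =>
    intro _ w hw
    rw [Walk.support_cons, List.mem_cons] at hw
    rcases hw with rfl | hw
    · exact (N.support h).1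
    · exact ih (N.support h).2 w hw

lemma patch_walk {G : SimpleGraph V} {u v : V}
    (hr : (G.deleteEdges {s(u,v)}).Reachable u v) :
    ∀ {a b : V}, G.Walk a b → (G.deleteEdges {s(u,v)}).Reachable a b := by
  intro a b p
  induction p with
  | nil => exact Reachable.refl _
  | @cons a w _ h q ih =>
    by_cases hs : s(a,w) = s(u,v)
    · rcases Sym2.eq_iff.mp hs with ⟨ha, hw⟩ | ⟨ha, hw⟩
      · subst ha; subst hw; exact hr.trans ih
      · subst ha; subst hw; exact hr.symm.trans ih
    · exact (SimpleGraph.Adj.reachable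
        (by rw [deleteEdges_adj]; exact ⟨h, by simpa using hs⟩)).trans ih

open Net in
lemma sidecross [Fintype V]
    (U T : Net V) (X : Set V) (u v u' v' : V) (E E' : Sym2 V)
    (hE : E = s(u,v)) (hE' : E' = s(u',v'))
    (fv : V → V) (fe : ∀ ⦃a b : V⦄, T.graph.Adj a b → U.graph.Walk (fv a) (fv b))
    (hemb : IsEmbedding T U X fv fe)
    (hTacy : T.graph.IsAcyclic)
    (hTdeg : ∀ w ∈ T.verts, T.deg w = 1 ∨ T.deg w = 3)
    (hTleaves : T.leaves = X)
    (hsepU : ¬ (U.graph.deleteEdges {E}).Reachable u v)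
    (hsepT : ¬ (T.graph.deleteEdges {E'}).Reachable u' v')
    (hu'T : u' ∈ T.verts)
    (he' : T.graph.Adj u' v')
    (hL1 : ∀ x ∈ X, (T.graph.deleteEdges {E'}).Reachable u' x →
      (U.graph.deleteEdges {E}).Reachable u x)
    (hL2 : ∀ x ∈ X, (T.graph.deleteEdges {E'}).Reachable v' x →
      ¬ (U.graph.deleteEdges {E}).Reachable u x)
    (hX2 : ∃ y ∈ X, (T.graph.deleteEdges {E'}).Reachable v' y) :
    ∀ ⦃a b : V⦄ (h : T.graph.Adj a b),
      (T.graph.deleteEdges {E'}).Reachable u' a →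
      (T.graph.deleteEdges {E'}).Reachable u' b →
      E ∉ (fe h).edges := by
  subst hE; subst hE'
  intro a b h ha hb hcross
  classical
  set χ : V → Prop := fun w => (U.graph.deleteEdges {s(u,v)}).Reachable u (fv w) with hχ
  have flip : ∀ ⦃c d : V⦄ (hh : T.graph.Adj c d), s(u,v) ∈ (fe hh).edges → ¬ (χ c ↔ χ d) :=
    fun c d hh hm => cross_flip (fe hh) (hemb.2.2.2.1 hh) hm hsepU
  have same : ∀ ⦃c d : V⦄ (hh : T.graph.Adj c d), s(u,v) ∉ (fe hh).edges → (χ c ↔ χ d) := by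
    intro c d hh hm
    have hr := walk_avoid_reach (fe hh) hm
    exact ⟨fun h0 => h0.trans hr, fun h0 => h0.trans hr.symm⟩
  have uniq : ∀ ⦃c d : V⦄ (hh : T.graph.Adj c d), s(u,v) ∈ (fe hh).edges → s(c,d) = s(a,b) := by
    intro c d hh hm
    by_contra hne
    exact hemb.2.2.2.2 hh h hne _ hm hcross
  have step_same : ∀ ⦃c d : V⦄ (hh : T.graph.Adj c d), s(c,d) ≠ s(a,b) → (χ c ↔ χ d) := by
    intro c d hh hne
    by_cases hm : s(u,v) ∈ (fe hh).edges
    · exact absurd (uniq hh hm) hne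
    · exact same hh hm
  have walkconst : ∀ {c d : V} (p : T.graph.Walk c d), (∀ f ∈ p.edges, f ≠ s(a,b)) → (χ c ↔ χ d) := by
    intro c d p
    induction p with
    | nil => exact fun _ => Iff.rfl
    | @cons c w _ hh q ih =>
      intro hf
      have h1 : χ c ↔ χ w :=
        step_same hh (hf _ (by rw [Walk.edges_cons]; exact List.mem_cons_self))
      exact h1.trans (ih fun f hmem => hf f (by rw [Walk.edges_cons]; exact List.mem_cons_of_mem _ hmem))
  have sides_disj : ∀ w, (T.graph.deleteEdges {s(u',v')}).Reachable u' w →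
      (T.graph.deleteEdges {s(u',v')}).Reachable v' w → False :=
    fun w h1 h2 => hsepT (h1.trans h2.symm)
  -- χ is constant on the v'-side
  have constv' : ∀ w, (T.graph.deleteEdges {s(u',v')}).Reachable v' w → (χ v' ↔ χ w) := by
    intro w hw
    obtain ⟨p⟩ := hw
    have hed : ∀ f ∈ p.edges, f ∈ T.graph.edgeSet := by
      intro f hf
      have := p.edges_subset_edgeSet hf
      rw [edgeSet_deleteEdges] at this
      exact this.1
    refine walkconst (p.transfer T.graph hed) ?_
    intro f hf hfe
    rw [Walk.edges_transfer] at hf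
    rw [hfe] at hf
    have hmem := p.fst_mem_support_of_mem_edges hf
    exact sides_disj a ha (support_reach p a hmem)
  have hχv' : ¬ χ v' := by
    obtain ⟨y, hyX, hyr⟩ := hX2
    have h1 := constv' y hyr
    have h2 : ¬ χ y := fun hc => hL2 y hyX hyr (by
      have hc' : (U.graph.deleteEdges {s(u,v)}).Reachable u (fv y) := hc
      rwa [hemb.2.1 y hyX] at hc')
    exact fun hc => h2 (h1.mp hc)
  have hne' : s(u',v') ≠ s(a,b) := by
    intro heq
    rcases Sym2.eq_iff.mp heq with ⟨h1, h2⟩ | ⟨h1, h2⟩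
    · exact hsepT (h2 ▸ hb)
    · exact hsepT (h2 ▸ ha)
  have hχu' : ¬ χ u' := fun hc => hχv' ((step_same he' hne').mp hc)
  -- the component S of u' after also deleting s(a,b)
  set D2 : Set (Sym2 V) := {s(u',v'), s(a,b)} with hD2
  set S : Set V := {w | (T.graph.deleteEdges D2).Reachable u' w} with hS
  have hmono : ∀ {c d : V}, (T.graph.deleteEdges D2).Reachable c d →
      (T.graph.deleteEdges {s(u',v')}).Reachable c d := by
    rintro c d ⟨p⟩
    refine ⟨p.transfer _ ?_⟩
    intro f hf
    have := p.edges_subset_edgeSet hf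
    rw [edgeSet_deleteEdges] at this ⊢
    exact ⟨this.1, fun hm => this.2 (by rw [hD2]; exact Set.mem_insert_iff.mpr (Or.inl (by simpa using hm)))⟩
  have hSχ : ∀ w ∈ S, ¬ χ w := by
    intro w hw
    obtain ⟨p⟩ := hw
    have hed : ∀ f ∈ p.edges, f ∈ T.graph.edgeSet := by
      intro f hf
      have := p.edges_subset_edgeSet hf
      rw [edgeSet_deleteEdges] at this
      exact this.1
    have hcst := walkconst (p.transfer T.graph hed) ?_
    · exact fun hc => hχu' (hcst.mpr hc)
    · intro f hf hfe
      rw [Walk.edges_transfer] at hf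
      have := p.edges_subset_edgeSet hf
      rw [edgeSet_deleteEdges] at this
      exact this.2 (by rw [hD2, hfe]; simp)
  have hSX : ∀ w ∈ S, w ∉ X := by
    intro w hw hwX
    refine hSχ w hw ?_
    show (U.graph.deleteEdges {s(u,v)}).Reachable u (fv w)
    rw [hemb.2.1 w hwX]
    exact hL1 w hwX (hmono hw)
  have hu'S : u' ∈ S := Reachable.refl _
  have hv'S : v' ∉ S := fun hv => hsepT (hmono hv)
  have hadjS : ∀ s ∈ S, ∀ t, T.graph.Adj s t → s(s,t) ∉ D2 → t ∈ S := by
    intro s hs t hadj hnb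
    exact Reachable.trans hs (SimpleGraph.Adj.reachable (by rw [deleteEdges_adj]; exact ⟨hadj, hnb⟩))
  have hSverts : ∀ s ∈ S, s ∈ T.verts := by
    intro s hs
    by_cases hsu : s = u'
    · exact hsu ▸ hu'T
    · obtain ⟨p⟩ := hs
      obtain ⟨t, hadj⟩ := end_has_nbr p (fun hh => hsu hh.symm)
      rw [deleteEdges_adj] at hadj
      exact (T.support hadj.1).2
  have hdeg3 : ∀ s ∈ S, T.deg s = 3 := by
    intro s hs
    rcases hTdeg s (hSverts s hs) with h1 | h3
    · exact absurd (hTleaves ▸ (⟨hSverts s hs, h1⟩ : s ∈ T.leaves)) (hSX s hs)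
    · exact h3
  have hnbrs : ∀ s ∈ S, ∃ t₁ t₂ t₃, t₁ ≠ t₂ ∧ t₁ ≠ t₃ ∧ t₂ ≠ t₃ ∧
      T.graph.Adj s t₁ ∧ T.graph.Adj s t₂ ∧ T.graph.Adj s t₃ := by
    intro s hs
    obtain ⟨t₁, t₂, t₃, h12, h13, h23, hset⟩ := Set.ncard_eq_three.mp (hdeg3 s hs)
    refine ⟨t₁, t₂, t₃, h12, h13, h23, ?_, ?_, ?_⟩ <;>
      · show _ ∈ T.graph.neighborSet s
        rw [hset]; simp
  -- the single forbidden neighbour coming from s(a,b)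
  have hbad : ∀ s t : V, s(s,t) = s(a,b) → t = (if s = a then b else a) := by
    intro s t hst
    rcases Sym2.eq_iff.mp hst with ⟨h1, h2⟩ | ⟨h1, h2⟩
    · rw [if_pos h1]; exact h2
    · have hsa : s ≠ a := by rw [h1]; exact h.ne'
      rw [if_neg hsa]; exact h2
  have hgood : ∀ s ∈ S, s ≠ u' → ∀ t, T.graph.Adj s t → t ≠ (if s = a then b else a) → t ∈ S := by
    intro s hs hsu t hadj htx
    refine hadjS s hs t hadj ?_
    rw [hD2]
    intro hmem
    rcases Set.mem_insert_iff.mp hmem with h1 | h2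
    · rcases Sym2.eq_iff.mp h1 with ⟨hh1, -⟩ | ⟨hh1, -⟩
      · exact hsu hh1
      · exact hv'S (hh1 ▸ hs)
    · exact htx (hbad s t (by simpa using h2))
  have hrnb : ∃ t, T.graph.Adj u' t ∧ t ∈ S := by
    have hu'X : u' ∉ X := hSX u' hu'S
    obtain ⟨t₁, t₂, t₃, h12, h13, h23, ha1, ha2, ha3⟩ := hnbrs u' hu'S
    obtain ⟨t, hto, htv', htb⟩ := pick_avoid2 (x := v') (y := (if u' = a then b else a)) h12 h13 h23
    have hadj : T.graph.Adj u' t := by rcases hto with rfl | rfl | rfl <;> assumption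
    refine ⟨t, hadj, hadjS u' hu'S t hadj ?_⟩
    rw [hD2]
    intro hmem
    rcases Set.mem_insert_iff.mp hmem with h1 | h2
    · rcases Sym2.eq_iff.mp h1 with ⟨-, hh2⟩ | ⟨hh1, -⟩
      · exact htv' hh2
      · exact he'.ne hh1
    · exact htb (hbad u' t (by simpa using h2))
  have hdeg2 : ∀ s ∈ S, s ≠ u' → ∃ t₁ t₂, t₁ ≠ t₂ ∧ t₁ ∈ S ∧ t₂ ∈ S ∧
      T.graph.Adj s t₁ ∧ T.graph.Adj s t₂ := by
    intro s hs hsu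
    obtain ⟨t₁, t₂, t₃, h12, h13, h23, ha1, ha2, ha3⟩ := hnbrs s hs
    obtain ⟨r₁, r₂, hrne, hro1, hro2, hr1x, hr2x⟩ := pick2_avoid1 (x := (if s = a then b else a)) h12 h13 h23
    have hadj1 : T.graph.Adj s r₁ := by rcases hro1 with rfl | rfl | rfl <;> assumption
    have hadj2 : T.graph.Adj s r₂ := by rcases hro2 with rfl | rfl | rfl <;> assumption
    exact ⟨r₁, r₂, hrne, hgood s hs hsu r₁ hadj1 hr1x, hgood s hs hsu r₂ hadj2 hr2x, hadj1, hadj2⟩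
  exact acyclic_no_core hTacy S u' hu'S hrnb hdeg2

open Net in
lemma construct_forward
    (U T U₁ T₁ : Net V) (X X₁ : Set V) (u u' x₁ : V) (E E' : Sym2 V)
    (fv : V → V) (fe : ∀ ⦃a b : V⦄, T.graph.Adj a b → U.graph.Walk (fv a) (fv b))
    (hemb : IsEmbedding T U X fv fe)
    (hx₁U : x₁ ∉ U.verts) (hx₁T : x₁ ∉ T.verts) (hu'T : u' ∈ T.verts)
    (hU₁v : U₁.verts = {w ∈ U.verts | (U.graph.deleteEdges {E}).Reachable u w} ∪ {x₁})
    (hU₁a : ∀ a b, U₁.graph.Adj a b ↔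
      ((U.graph.Adj a b ∧ s(a, b) ≠ E ∧
        (U.graph.deleteEdges {E}).Reachable u a ∧
        (U.graph.deleteEdges {E}).Reachable u b) ∨
       (a = u ∧ b = x₁) ∨ (a = x₁ ∧ b = u)))
    (hT₁v : T₁.verts = {w ∈ T.verts | (T.graph.deleteEdges {E'}).Reachable u' w} ∪ {x₁})
    (hT₁a : ∀ a b, T₁.graph.Adj a b ↔
      ((T.graph.Adj a b ∧ s(a, b) ≠ E' ∧
        (T.graph.deleteEdges {E'}).Reachable u' a ∧
        (T.graph.deleteEdges {E'}).Reachable u' b) ∨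
       (a = u' ∧ b = x₁) ∨ (a = x₁ ∧ b = u')))
    (hX₁X : X₁ ⊆ X) (hXU : X ⊆ U.verts)
    (hchi : ∀ a, (T.graph.deleteEdges {E'}).Reachable u' a →
      (U.graph.deleteEdges {E}).Reachable u (fv a))
    (hnc : ∀ ⦃a b : V⦄ (h : T.graph.Adj a b),
      (T.graph.deleteEdges {E'}).Reachable u' a →
      (T.graph.deleteEdges {E'}).Reachable u' b → E ∉ (fe h).edges)
    (q : U.graph.Walk (fv u') u) (hqp : q.IsPath) (hqe : E ∉ q.edges)
    (hqdisj : ∀ ⦃a b : V⦄ (hT : T.graph.Adj a b), s(a,b) ≠ E' →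
      ∀ f ∈ q.edges, f ∉ (fe hT).edges) :
    U₁.Displays T₁ (X₁ ∪ {x₁}) := by
  classical
  set fv₁ : V → V := fun a => if a = x₁ then x₁ else fv a with hfv₁
  have hfvx : fv₁ x₁ = x₁ := if_pos rfl
  have hfvne : ∀ a, a ≠ x₁ → fv₁ a = fv a := fun a ha => if_neg ha
  have hTne : ∀ a ∈ T.verts, a ≠ x₁ := fun a ha he => hx₁T (he ▸ ha)
  have hUne : ∀ a ∈ U.verts, a ≠ x₁ := fun a ha he => hx₁U (he ▸ ha)
  have hfvUne : ∀ a ∈ T.verts, fv a ≠ x₁ := fun a ha => hUne _ (hemb.1 a ha)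
  -- edges of u'-side fe-walks live in U₁
  have hsideedges : ∀ ⦃a b : V⦄ (hT : T.graph.Adj a b),
      (T.graph.deleteEdges {E'}).Reachable u' a →
      (T.graph.deleteEdges {E'}).Reachable u' b →
      ∀ f ∈ (fe hT).edges, f ∈ U₁.graph.edgeSet := by
    intro a b hT ha hb f hf
    have hEout : E ∉ (fe hT).edges := hnc hT ha hb
    have hsup : ∀ w ∈ (fe hT).support, (U.graph.deleteEdges {E}).Reachable u w :=
      fun w hw => (hchi a ha).trans (support_side (fe hT) hEout w hw)
    induction f using Sym2.ind with
    | _ p r =>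
      have hp : p ∈ (fe hT).support := (fe hT).fst_mem_support_of_mem_edges hf
      have hr : r ∈ (fe hT).support := (fe hT).snd_mem_support_of_mem_edges hf
      rw [SimpleGraph.mem_edgeSet, hU₁a]
      refine Or.inl ⟨(mem_edgeSet _).mp ((fe hT).edges_subset_edgeSet hf), ?_, hsup p hp, hsup r hr⟩
      intro hcon
      exact hEout (hcon ▸ hf)
  -- edges of q live in U₁
  have hqedges : ∀ f ∈ q.edges, f ∈ U₁.graph.edgeSet := by
    intro f hf
    have hsup : ∀ w ∈ q.support, (U.graph.deleteEdges {E}).Reachable u w :=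
      fun w hw => (hchi u' (Reachable.refl _)).trans (support_side q hqe w hw)
    induction f using Sym2.ind with
    | _ p r =>
      have hp : p ∈ q.support := q.fst_mem_support_of_mem_edges hf
      have hr : r ∈ q.support := q.snd_mem_support_of_mem_edges hf
      rw [SimpleGraph.mem_edgeSet, hU₁a]
      refine Or.inl ⟨(mem_edgeSet _).mp (q.edges_subset_edgeSet hf), ?_, hsup p hp, hsup r hr⟩
      intro hcon
      exact hqe (hcon ▸ hf)
  have hadjux : U₁.graph.Adj u x₁ := (hU₁a u x₁).mpr (Or.inr (Or.inl ⟨rfl, rfl⟩))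
  have hqsupU : ∀ w ∈ q.support, w ∈ U.verts :=
    net_support_mem U q (hemb.1 u' hu'T)
  -- the new-leaf walk
  have hx₁qt : x₁ ∉ (q.transfer U₁.graph hqedges).support := by
    rw [Walk.support_transfer]
    exact fun hm => hx₁U (hqsupU x₁ hm)
  set wB : U₁.graph.Walk (fv₁ u') (fv₁ x₁) :=
    (((q.transfer U₁.graph hqedges).concat hadjux).copy
      (hfvne u' (hTne u' hu'T)).symm hfvx.symm) with hwB
  have hwBpath : wB.IsPath := by
    rw [hwB]
    simp only [Walk.isPath_copy]
    exact concat_isPath hadjux (transfer_isPath q hqedges hqp) hx₁qt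
  have hwBedges : ∀ f ∈ wB.edges, f ∈ q.edges ∨ f = s(u, x₁) := by
    intro f hf
    rw [hwB, Walk.edges_copy, Walk.edges_concat, List.concat_eq_append, List.mem_append,
      Walk.edges_transfer] at hf
    rcases hf with hf | hf
    · exact Or.inl hf
    · exact Or.inr (List.mem_singleton.mp hf)
  -- construct the edge images
  have spec : ∀ (a b : V) (h₁ : T₁.graph.Adj a b), ∃ w : U₁.graph.Walk (fv₁ a) (fv₁ b),
      w.IsPath ∧
      ((∃ hT : T.graph.Adj a b, s(a,b) ≠ E' ∧ w.edges = (fe hT).edges) ∨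
       (s(a,b) = s(u',x₁) ∧ ∀ f ∈ w.edges, f ∈ q.edges ∨ f = s(u,x₁))) := by
    intro a b h₁
    rcases (hT₁a a b).mp h₁ with ⟨hT, hne, ha, hb⟩ | ⟨rfl, rfl⟩ | ⟨rfl, rfl⟩
    · have haT := (T.support hT).1
      have hbT := (T.support hT).2
      refine ⟨((fe hT).transfer U₁.graph (hsideedges hT ha hb)).copy
        (hfvne a (hTne a haT)).symm (hfvne b (hTne b hbT)).symm, ?_, Or.inl ⟨hT, hne, ?_⟩⟩
      · simp only [Walk.isPath_copy]
        exact transfer_isPath _ _ (hemb.2.2.2.1 hT)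
      · rw [Walk.edges_copy, Walk.edges_transfer]
    · exact ⟨wB, hwBpath, Or.inr ⟨rfl, hwBedges⟩⟩
    · refine ⟨wB.reverse, hwBpath.reverse, Or.inr ⟨Sym2.eq_swap, ?_⟩⟩
      intro f hf
      rw [Walk.edges_reverse, List.mem_reverse] at hf
      exact hwBedges f hf
  choose few hfewp hfews using spec
  refine ⟨fv₁, fun a b h => few a b h, ?_, ?_, ?_, fun a b h => hfewp a b h, ?_⟩
  · -- verts
    intro a ha
    rw [hT₁v] at ha
    rw [hU₁v]
    rcases ha with ⟨haT, har⟩ | ha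
    · rw [hfvne a (hTne a haT)]
      exact Or.inl ⟨hemb.1 a haT, hchi a har⟩
    · rw [Set.mem_singleton_iff] at ha
      subst ha
      rw [hfvx]
      exact Or.inr rfl
  · -- fixes labels
    intro x hx
    rcases hx with hx | hx
    · rw [hfvne x (hUne x (hXU (hX₁X hx)))]
      exact hemb.2.1 x (hX₁X hx)
    · rw [Set.mem_singleton_iff] at hx
      subst hx
      exact hfvx
  · -- injective
    intro a ha b hb heq
    rw [hT₁v] at ha hb
    rcases ha with ⟨haT, -⟩ | ha
    · rcases hb with ⟨hbT, -⟩ | hb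
      · rw [hfvne a (hTne a haT), hfvne b (hTne b hbT)] at heq
        exact hemb.2.2.1 a haT b hbT heq
      · rw [Set.mem_singleton_iff] at hb
        subst hb
        rw [hfvne a (hTne a haT), hfvx] at heq
        exact absurd heq (hfvUne a haT)
    · rw [Set.mem_singleton_iff] at ha
      subst ha
      rcases hb with ⟨hbT, -⟩ | hb
      · rw [hfvne b (hTne b hbT), hfvx] at heq
        exact absurd heq.symm (hfvUne b hbT)
      · rw [Set.mem_singleton_iff] at hb
        exact hb.symm
  · -- edge-disjointness
    intro a b c d h h' hne f hf hf'
    rcases hfews a b h with ⟨hT, hneE', hedges⟩ | ⟨hsym, hmem⟩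
    · rcases hfews c d h' with ⟨hT', hneE'', hedges'⟩ | ⟨hsym', hmem'⟩
      · rw [hedges] at hf
        rw [hedges'] at hf'
        exact hemb.2.2.2.2 hT hT' hne f hf hf'
      · rw [hedges] at hf
        rcases hmem' f hf' with hfq | hfeq
        · exact hqdisj hT hneE' f hfq hf
        · rw [hfeq] at hf
          exact hx₁U (U.support ((mem_edgeSet _).mp ((fe hT).edges_subset_edgeSet hf))).2
    · rcases hfews c d h' with ⟨hT', hneE'', hedges'⟩ | ⟨hsym', hmem'⟩
      · rw [hedges'] at hf'
        rcases hmem f hf with hfq | hfeq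
        · exact hqdisj hT' hneE'' f hfq hf'
        · rw [hfeq] at hf'
          exact hx₁U (U.support ((mem_edgeSet _).mp ((fe hT').edges_subset_edgeSet hf'))).2
      · exact hne (hsym.trans hsym'.symm)

open Net in
lemma extract_side
    (U T U₁ T₁ : Net V) (X₁ : Set V) (u u' v' x₁ : V) (E E' : Sym2 V)
    (hE' : E' = s(u',v'))
    (fv₁ : V → V) (fe₁ : ∀ ⦃a b : V⦄, T₁.graph.Adj a b → U₁.graph.Walk (fv₁ a) (fv₁ b))
    (hemb : IsEmbedding T₁ U₁ (X₁ ∪ {x₁}) fv₁ fe₁)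
    (hx₁U : x₁ ∉ U.verts) (hx₁T : x₁ ∉ T.verts) (hu'T : u' ∈ T.verts) (huU : u ∈ U.verts)
    (hsepT : ¬ (T.graph.deleteEdges {E'}).Reachable u' v')
    (hU₁v : U₁.verts = {w ∈ U.verts | (U.graph.deleteEdges {E}).Reachable u w} ∪ {x₁})
    (hU₁a : ∀ a b, U₁.graph.Adj a b ↔
      ((U.graph.Adj a b ∧ s(a, b) ≠ E ∧
        (U.graph.deleteEdges {E}).Reachable u a ∧
        (U.graph.deleteEdges {E}).Reachable u b) ∨
       (a = u ∧ b = x₁) ∨ (a = x₁ ∧ b = u)))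
    (hT₁v : T₁.verts = {w ∈ T.verts | (T.graph.deleteEdges {E'}).Reachable u' w} ∪ {x₁})
    (hT₁a : ∀ a b, T₁.graph.Adj a b ↔
      ((T.graph.Adj a b ∧ s(a, b) ≠ E' ∧
        (T.graph.deleteEdges {E'}).Reachable u' a ∧
        (T.graph.deleteEdges {E'}).Reachable u' b) ∨
       (a = u' ∧ b = x₁) ∨ (a = x₁ ∧ b = u'))) :
    (∀ a ∈ T.verts, (T.graph.deleteEdges {E'}).Reachable u' a →
       fv₁ a ∈ U.verts ∧ (U.graph.deleteEdges {E}).Reachable u (fv₁ a)) ∧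
    (∀ a ∈ T.verts, (T.graph.deleteEdges {E'}).Reachable u' a →
       ∀ b ∈ T.verts, (T.graph.deleteEdges {E'}).Reachable u' b → fv₁ a = fv₁ b → a = b) ∧
    (∀ x ∈ X₁, fv₁ x = x) ∧
    (∀ ⦃a b : V⦄, T.graph.Adj a b →
      (T.graph.deleteEdges {E'}).Reachable u' a →
      (T.graph.deleteEdges {E'}).Reachable u' b →
       ∃ w : U.graph.Walk (fv₁ a) (fv₁ b), w.IsPath ∧
         (∃ h₁ : T₁.graph.Adj a b, w.edges = (fe₁ h₁).edges) ∧
         (∀ f ∈ w.edges, ∀ p r : V, f = s(p,r) →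
           (U.graph.deleteEdges {E}).Reachable u p ∧ (U.graph.deleteEdges {E}).Reachable u r)) ∧
    (∃ (hnew : T₁.graph.Adj u' x₁) (Q : U.graph.Walk (fv₁ u') u), Q.IsPath ∧
       (∀ f ∈ Q.edges, f ∈ (fe₁ hnew).edges) ∧
       (∀ f ∈ Q.edges, ∀ p r : V, f = s(p,r) →
         (U.graph.deleteEdges {E}).Reachable u p ∧ (U.graph.deleteEdges {E}).Reachable u r) ∧
       (∀ w ∈ Q.support, (U.graph.deleteEdges {E}).Reachable u w)) := by
  classical
  have hx₁T₁ : x₁ ∈ T₁.verts := by rw [hT₁v]; exact Or.inr rfl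
  have hmemT₁ : ∀ a ∈ T.verts, (T.graph.deleteEdges {E'}).Reachable u' a → a ∈ T₁.verts := by
    intro a ha har
    rw [hT₁v]
    exact Or.inl ⟨ha, har⟩
  have hfv₁x : fv₁ x₁ = x₁ := hemb.2.1 x₁ (Or.inr rfl)
  have hfvne : ∀ a ∈ T.verts, (T.graph.deleteEdges {E'}).Reachable u' a → fv₁ a ≠ x₁ := by
    intro a ha har heq
    have := hemb.2.2.1 a (hmemT₁ a ha har) x₁ hx₁T₁ (heq.trans hfv₁x.symm)
    exact hx₁T (this ▸ ha)
  have hU₁nbr : ∀ w, U₁.graph.Adj x₁ w → w = u := by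
    intro w hadj
    rcases (hU₁a x₁ w).mp hadj with ⟨h1, -, -, -⟩ | ⟨h1, -⟩ | ⟨-, h2⟩
    · exact absurd (U.support h1).1 hx₁U
    · exact absurd (h1 ▸ huU) hx₁U
    · exact h2
  -- edge dissection for U₁-walks avoiding x₁
  have hedgefact : ∀ {c d : V} (p : U₁.graph.Walk c d), x₁ ∉ p.support →
      ∀ f ∈ p.edges, ∀ pp rr : V, f = s(pp,rr) →
      U.graph.Adj pp rr ∧ s(pp,rr) ≠ E ∧
      (U.graph.deleteEdges {E}).Reachable u pp ∧ (U.graph.deleteEdges {E}).Reachable u rr := by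
    intro c d p hx f hf pp rr hfe
    subst hfe
    have hpp := p.fst_mem_support_of_mem_edges hf
    have hrr := p.snd_mem_support_of_mem_edges hf
    have hadj : U₁.graph.Adj pp rr := (mem_edgeSet _).mp (p.edges_subset_edgeSet hf)
    rcases (hU₁a pp rr).mp hadj with ⟨h1, h2, h3, h4⟩ | ⟨-, h2⟩ | ⟨h1, -⟩
    · exact ⟨h1, h2, h3, h4⟩
    · exact absurd (h2 ▸ hrr) hx
    · exact absurd (h1 ▸ hpp) hx
  have hrep : ∀ f : Sym2 V, ∃ e1 e2, f = s(e1, e2) :=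
    fun f => Sym2.inductionOn f (fun x y => ⟨x, y, rfl⟩)
  have htrans : ∀ {c d : V} (p : U₁.graph.Walk c d), x₁ ∉ p.support →
      ∀ f ∈ p.edges, f ∈ U.graph.edgeSet := by
    intro c d p hx f hf
    obtain ⟨pp, rr, rfl⟩ := hrep f
    rw [SimpleGraph.mem_edgeSet]
    exact (hedgefact p hx _ hf pp rr rfl).1
  have hEoutgen : ∀ {c d : V} (p : U₁.graph.Walk c d), x₁ ∉ p.support → E ∉ p.edges := by
    intro c d p hx hmem
    obtain ⟨e1, e2, hEeq⟩ := hrep E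
    exact (hedgefact p hx E hmem e1 e2 hEeq).2.1 hEeq.symm
  -- part 1 : vertices
  have part1 : ∀ a ∈ T.verts, (T.graph.deleteEdges {E'}).Reachable u' a →
      fv₁ a ∈ U.verts ∧ (U.graph.deleteEdges {E}).Reachable u (fv₁ a) := by
    intro a ha har
    have := hemb.1 a (hmemT₁ a ha har)
    rw [hU₁v] at this
    rcases this with ⟨h1, h2⟩ | h1
    · exact ⟨h1, h2⟩
    · exact absurd (Set.mem_singleton_iff.mp h1) (hfvne a ha har)
  have part2 : ∀ a ∈ T.verts, (T.graph.deleteEdges {E'}).Reachable u' a →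
      ∀ b ∈ T.verts, (T.graph.deleteEdges {E'}).Reachable u' b → fv₁ a = fv₁ b → a = b :=
    fun a ha har b hb hbr heq => hemb.2.2.1 a (hmemT₁ a ha har) b (hmemT₁ b hb hbr) heq
  have part3 : ∀ x ∈ X₁, fv₁ x = x := fun x hx => hemb.2.1 x (Or.inl hx)
  -- part 4 : side edges
  have part4 : ∀ ⦃a b : V⦄, T.graph.Adj a b →
      (T.graph.deleteEdges {E'}).Reachable u' a →
      (T.graph.deleteEdges {E'}).Reachable u' b →
       ∃ w : U.graph.Walk (fv₁ a) (fv₁ b), w.IsPath ∧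
         (∃ h₁ : T₁.graph.Adj a b, w.edges = (fe₁ h₁).edges) ∧
         (∀ f ∈ w.edges, ∀ p r : V, f = s(p,r) →
           (U.graph.deleteEdges {E}).Reachable u p ∧ (U.graph.deleteEdges {E}).Reachable u r) := by
    intro a b h ha hb
    have haT := (T.support h).1
    have hbT := (T.support h).2
    have hneE' : s(a, b) ≠ E' := by
      rw [hE']
      intro heq
      rcases Sym2.eq_iff.mp heq with ⟨-, h2⟩ | ⟨h1, -⟩
      · exact hsepT (h2 ▸ hb)
      · exact hsepT (h1 ▸ ha)
    have h₁ : T₁.graph.Adj a b := (hT₁a a b).mpr (Or.inl ⟨h, hneE', ha, hb⟩)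
    have hpath := hemb.2.2.2.1 h₁
    have hx : x₁ ∉ (fe₁ h₁).support := by
      intro hmem
      by_cases hxa : x₁ = fv₁ a
      · exact hfvne a haT ha hxa.symm
      · by_cases hxb : x₁ = fv₁ b
        · exact hfvne b hbT hb hxb.symm
        · obtain ⟨t₁, t₂, htne, hadj1, hadj2, -, -⟩ :=
            internal_two_neighbors (fe₁ h₁) hpath x₁ hmem hxa hxb
          exact htne ((hU₁nbr t₁ hadj1).trans (hU₁nbr t₂ hadj2).symm)
    refine ⟨(fe₁ h₁).transfer U.graph (htrans _ hx), transfer_isPath _ _ hpath,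
      ⟨h₁, Walk.edges_transfer _ _⟩, ?_⟩
    intro f hf p r hfe
    rw [Walk.edges_transfer] at hf
    exact ⟨(hedgefact _ hx f hf p r hfe).2.2.1, (hedgefact _ hx f hf p r hfe).2.2.2⟩
  -- part 5 : the new-leaf walk
  have hnew : T₁.graph.Adj u' x₁ := (hT₁a u' x₁).mpr (Or.inr (Or.inl ⟨rfl, rfl⟩))
  have hp0 := hemb.2.2.2.1 hnew
  set p0 : U₁.graph.Walk (fv₁ u') x₁ := (fe₁ hnew).copy rfl hfv₁x with hp0def
  have hp0path : p0.IsPath := by rw [hp0def]; simpa using hp0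
  have hneq : x₁ ≠ fv₁ u' := fun h => hfvne u' hu'T (Reachable.refl _) h.symm
  obtain ⟨w, hadj, qq, hrev⟩ := Walk.exists_eq_cons_of_ne hneq p0.reverse
  have hwu : w = u := hU₁nbr w hadj
  subst hwu
  have hrevpath : (Walk.cons hadj qq).IsPath := hrev ▸ hp0path.reverse
  have hqqpath : qq.IsPath := ((Walk.cons_isPath_iff hadj qq).mp hrevpath).1
  have hx₁qq : x₁ ∉ qq.support := ((Walk.cons_isPath_iff hadj qq).mp hrevpath).2
  have hqqedges : ∀ f ∈ qq.edges, f ∈ (fe₁ hnew).edges := by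
    intro f hf
    have h1 : f ∈ (Walk.cons hadj qq).edges := by
      rw [Walk.edges_cons]; exact List.mem_cons_of_mem _ hf
    rw [← hrev, Walk.edges_reverse, List.mem_reverse, hp0def, Walk.edges_copy] at h1
    exact h1
  set qt := qq.transfer U.graph (htrans qq hx₁qq) with hqt
  refine ⟨part1, part2, part3, part4, hnew, qt.reverse, (transfer_isPath _ _ hqqpath).reverse, ?_, ?_, ?_⟩
  · intro f hf
    rw [Walk.edges_reverse, List.mem_reverse, hqt, Walk.edges_transfer] at hf
    exact hqqedges f hf
  · intro f hf p r hfe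
    rw [Walk.edges_reverse, List.mem_reverse, hqt, Walk.edges_transfer] at hf
    exact ⟨(hedgefact qq hx₁qq f hf p r hfe).2.2.1, (hedgefact qq hx₁qq f hf p r hfe).2.2.2⟩
  · intro w hw
    rw [Walk.support_reverse, List.mem_reverse] at hw
    have hEq : E ∉ qt.edges := by
      rw [hqt, Walk.edges_transfer]
      exact hEoutgen qq hx₁qq
    exact support_side qt hEq w hw

/-- Let `U` be a non-simple `3`-cuttable unrooted binary phylogenetic
network on `X` and `T` an unrooted binary phylogenetic `X`-tree.  Let `e = {u, v}` be a
non-trivial cut-edge of `U` inducing the split `X₁ | X₂` (with `X₁` the side of `u`), and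
let `e' = {u', v'}` be an edge of `T` inducing the same split (with `X₁` the side of
`u'`).  Let `U₁, U₂` be obtained from `U` by deleting `e` and adding new leaf edges
`{u, x₁}` and `{v, x₂}`, where `x₁, x₂` are new labels, and let `T₁, T₂` be obtained from
`T` by deleting `e'` and adding the leaf edges `{u', x₁}` and `{v', x₂}`; here `T₁, U₁`
have leaf set `X₁ ∪ {x₁}` and `T₂, U₂` have leaf set `X₂ ∪ {x₂}`.  Then `U` displays `T`
if and only if `U₁` displays `T₁` and `U₂` displays `T₂`. -/
theorem branching_operation_displays {V : Type} [Fintype V]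
    (U T : Net V) (X : Set V) (hU : U.IsUBPN X) (h3 : U.QCuttable 3)
    (hT : T.IsTree X) (hns : ¬ U.Simple X)
    (u v : V) (he : U.IsCutEdge s(u, v)) (hu : u ∉ X) (hv : v ∉ X)
    (X₁ X₂ : Set V) (hsplit : U.InducesSplit X s(u, v) X₁ X₂)
    (hX₁U : ∀ x, x ∈ X₁ ↔ x ∈ X ∧ (U.graph.deleteEdges {s(u, v)}).Reachable u x)
    (u' v' : V) (he' : T.graph.Adj u' v')
    (hsplit' : T.InducesSplit X s(u', v') X₁ X₂)
    (hX₁T : ∀ x, x ∈ X₁ ↔ x ∈ X ∧ (T.graph.deleteEdges {s(u', v')}).Reachable u' x)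
    (x₁ x₂ : V) (hx₁ : x₁ ∉ U.verts ∪ T.verts) (hx₂ : x₂ ∉ U.verts ∪ T.verts)
    (hx₁₂ : x₁ ≠ x₂)
    (U₁ U₂ T₁ T₂ : Net V)
    (hU₁v : U₁.verts =
      {w ∈ U.verts | (U.graph.deleteEdges {s(u, v)}).Reachable u w} ∪ {x₁})
    (hU₁a : ∀ a b, U₁.graph.Adj a b ↔
      ((U.graph.Adj a b ∧ s(a, b) ≠ s(u, v) ∧
        (U.graph.deleteEdges {s(u, v)}).Reachable u a ∧
        (U.graph.deleteEdges {s(u, v)}).Reachable u b) ∨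
       (a = u ∧ b = x₁) ∨ (a = x₁ ∧ b = u)))
    (hU₂v : U₂.verts =
      {w ∈ U.verts | (U.graph.deleteEdges {s(u, v)}).Reachable v w} ∪ {x₂})
    (hU₂a : ∀ a b, U₂.graph.Adj a b ↔
      ((U.graph.Adj a b ∧ s(a, b) ≠ s(u, v) ∧
        (U.graph.deleteEdges {s(u, v)}).Reachable v a ∧
        (U.graph.deleteEdges {s(u, v)}).Reachable v b) ∨
       (a = v ∧ b = x₂) ∨ (a = x₂ ∧ b = v)))
    (hT₁v : T₁.verts =
      {w ∈ T.verts | (T.graph.deleteEdges {s(u', v')}).Reachable u' w} ∪ {x₁})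
    (hT₁a : ∀ a b, T₁.graph.Adj a b ↔
      ((T.graph.Adj a b ∧ s(a, b) ≠ s(u', v') ∧
        (T.graph.deleteEdges {s(u', v')}).Reachable u' a ∧
        (T.graph.deleteEdges {s(u', v')}).Reachable u' b) ∨
       (a = u' ∧ b = x₁) ∨ (a = x₁ ∧ b = u')))
    (hT₂v : T₂.verts =
      {w ∈ T.verts | (T.graph.deleteEdges {s(u', v')}).Reachable v' w} ∪ {x₂})
    (hT₂a : ∀ a b, T₂.graph.Adj a b ↔
      ((T.graph.Adj a b ∧ s(a, b) ≠ s(u', v') ∧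
        (T.graph.deleteEdges {s(u', v')}).Reachable v' a ∧
        (T.graph.deleteEdges {s(u', v')}).Reachable v' b) ∨
       (a = v' ∧ b = x₂) ∨ (a = x₂ ∧ b = v'))) :
    U.Displays T X ↔
      (U₁.Displays T₁ (X₁ ∪ {x₁}) ∧ U₂.Displays T₂ (X₂ ∪ {x₂})) := by
  classical
  obtain ⟨hUconn, hUdeg, hUleaves⟩ := hU
  obtain ⟨⟨hTconn, hTdeg, hTleaves⟩, hTacy⟩ := hT
  have huv : U.graph.Adj u v := (SimpleGraph.mem_edgeSet _).mp he.1
  have hXU : X ⊆ U.verts := by rw [← hUleaves]; exact fun x hx => hx.1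
  have hXT : X ⊆ T.verts := by rw [← hTleaves]; exact fun x hx => hx.1
  have huU : u ∈ U.verts := (U.support huv).1
  have hvU : v ∈ U.verts := (U.support huv).2
  have hu'T : u' ∈ T.verts := (T.support he').1
  have hv'T : v' ∈ T.verts := (T.support he').2
  have hx₁Uv : x₁ ∉ U.verts := fun h => hx₁ (Or.inl h)
  have hx₁Tv : x₁ ∉ T.verts := fun h => hx₁ (Or.inr h)
  have hx₂Uv : x₂ ∉ U.verts := fun h => hx₂ (Or.inl h)
  have hx₂Tv : x₂ ∉ T.verts := fun h => hx₂ (Or.inr h)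
  have hsepU : ¬ (U.graph.deleteEdges {s(u,v)}).Reachable u v := by
    intro hr
    refine he.2 ⟨hUconn.1, ?_⟩
    intro a ha b hb
    obtain ⟨p⟩ := hUconn.2 a ha b hb
    exact patch_walk hr p
  have hsepU' : ¬ (U.graph.deleteEdges {s(u,v)}).Reachable v u := fun h => hsepU h.symm
  have hsepT : ¬ (T.graph.deleteEdges {s(u',v')}).Reachable u' v' := by
    have hbr := SimpleGraph.isAcyclic_iff_forall_adj_isBridge.mp hTacy he'
    rw [SimpleGraph.isBridge_iff] at hbr
    exact hbr
  have hsepT' : ¬ (T.graph.deleteEdges {s(u',v')}).Reachable v' u' := fun h => hsepT h.symm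
  have hdichU : ∀ w ∈ U.verts, (U.graph.deleteEdges {s(u,v)}).Reachable u w ∨
      (U.graph.deleteEdges {s(u,v)}).Reachable v w := by
    intro w hw
    obtain ⟨p⟩ := hUconn.2 w hw u huU
    exact side_total p
  have hdichT : ∀ w ∈ T.verts, (T.graph.deleteEdges {s(u',v')}).Reachable u' w ∨
      (T.graph.deleteEdges {s(u',v')}).Reachable v' w := by
    intro w hw
    obtain ⟨p⟩ := hTconn.2 w hw u' hu'T
    exact side_total p
  obtain ⟨hX₁ne, hX₂ne, hdisj, hunion, -⟩ := hsplit
  have hX₁X : X₁ ⊆ X := fun x hx => hunion ▸ Or.inl hx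
  have hX₂X : X₂ ⊆ X := fun x hx => hunion ▸ Or.inr hx
  have hX₂nX₁ : ∀ x ∈ X₂, x ∉ X₁ := fun x hx2 hx1 =>
    Set.eq_empty_iff_forall_notMem.mp hdisj x ⟨hx1, hx2⟩
  have hX₁Ur : ∀ x ∈ X₁, (U.graph.deleteEdges {s(u,v)}).Reachable u x :=
    fun x hx => ((hX₁U x).mp hx).2
  have hX₁Tr : ∀ x ∈ X₁, (T.graph.deleteEdges {s(u',v')}).Reachable u' x :=
    fun x hx => ((hX₁T x).mp hx).2
  have hX₂Ur : ∀ x ∈ X₂, (U.graph.deleteEdges {s(u,v)}).Reachable v x := by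
    intro x hx
    rcases hdichU x (hXU (hX₂X hx)) with h1 | h1
    · exact absurd ((hX₁U x).mpr ⟨hX₂X hx, h1⟩) (hX₂nX₁ x hx)
    · exact h1
  have hX₂Tr : ∀ x ∈ X₂, (T.graph.deleteEdges {s(u',v')}).Reachable v' x := by
    intro x hx
    rcases hdichT x (hXT (hX₂X hx)) with h1 | h1
    · exact absurd ((hX₁T x).mpr ⟨hX₂X hx, h1⟩) (hX₂nX₁ x hx)
    · exact h1
  constructor
  · rintro ⟨fvv, fee, hemb⟩
    have hL1 : ∀ x ∈ X, (T.graph.deleteEdges {s(u',v')}).Reachable u' x →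
        (U.graph.deleteEdges {s(u,v)}).Reachable u x :=
      fun x hx hr => ((hX₁U x).mp ((hX₁T x).mpr ⟨hx, hr⟩)).2
    have hL2 : ∀ x ∈ X, (T.graph.deleteEdges {s(u',v')}).Reachable v' x →
        ¬ (U.graph.deleteEdges {s(u,v)}).Reachable u x := by
      intro x hx hr hru
      exact hsepT ((((hX₁T x).mp ((hX₁U x).mpr ⟨hx, hru⟩)).2).trans hr.symm)
    have hL1' : ∀ x ∈ X, (T.graph.deleteEdges {s(u',v')}).Reachable v' x →
        (U.graph.deleteEdges {s(u,v)}).Reachable v x := by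
      intro x hx hr
      rcases hdichU x (hXU hx) with h1 | h1
      · exact absurd h1 (hL2 x hx hr)
      · exact h1
    have hL2' : ∀ x ∈ X, (T.graph.deleteEdges {s(u',v')}).Reachable u' x →
        ¬ (U.graph.deleteEdges {s(u,v)}).Reachable v x :=
      fun x hx hr hrv => hsepU ((hL1 x hx hr).trans hrv.symm)
    have hX2w : ∃ y ∈ X, (T.graph.deleteEdges {s(u',v')}).Reachable v' y := by
      obtain ⟨y, hy⟩ := hX₂ne
      exact ⟨y, hX₂X hy, hX₂Tr y hy⟩
    have hX1w : ∃ y ∈ X, (T.graph.deleteEdges {s(u',v')}).Reachable u' y := by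
      obtain ⟨y, hy⟩ := hX₁ne
      exact ⟨y, hX₁X hy, hX₁Tr y hy⟩
    have hnc1 := sidecross U T X u v u' v' s(u,v) s(u',v') rfl rfl fvv fee hemb
      hTacy hTdeg hTleaves hsepU hsepT hu'T he' hL1 hL2 hX2w
    have hnc2 := sidecross U T X v u v' u' s(u,v) s(u',v') Sym2.eq_swap Sym2.eq_swap fvv fee hemb
      hTacy hTdeg hTleaves hsepU' hsepT' hv'T he'.symm hL1' hL2' hX1w
    have hchistep1 : ∀ {c d : V} (p : (T.graph.deleteEdges {s(u',v')}).Walk c d),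
        (T.graph.deleteEdges {s(u',v')}).Reachable u' c →
        ((U.graph.deleteEdges {s(u,v)}).Reachable u (fvv c) ↔
         (U.graph.deleteEdges {s(u,v)}).Reachable u (fvv d)) := by
      intro c d p
      induction p with
      | nil => exact fun _ => Iff.rfl
      | @cons c w _ h q ih =>
        intro hc
        have hTadj : T.graph.Adj c w := (SimpleGraph.deleteEdges_adj.mp h).1
        have hw : (T.graph.deleteEdges {s(u',v')}).Reachable u' w := hc.trans h.reachable
        have hr := walk_avoid_reach (fee hTadj) (hnc1 hTadj hc hw)
        exact (Iff.intro (fun h0 => h0.trans hr) (fun h0 => h0.trans hr.symm)).trans (ih hw)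
    have hchistep2 : ∀ {c d : V} (p : (T.graph.deleteEdges {s(u',v')}).Walk c d),
        (T.graph.deleteEdges {s(u',v')}).Reachable v' c →
        ((U.graph.deleteEdges {s(u,v)}).Reachable v (fvv c) ↔
         (U.graph.deleteEdges {s(u,v)}).Reachable v (fvv d)) := by
      intro c d p
      induction p with
      | nil => exact fun _ => Iff.rfl
      | @cons c w _ h q ih =>
        intro hc
        have hTadj : T.graph.Adj c w := (SimpleGraph.deleteEdges_adj.mp h).1
        have hw : (T.graph.deleteEdges {s(u',v')}).Reachable v' w := hc.trans h.reachable
        have hr := walk_avoid_reach (fee hTadj) (hnc2 hTadj hc hw)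
        exact (Iff.intro (fun h0 => h0.trans hr) (fun h0 => h0.trans hr.symm)).trans (ih hw)
    have hchi1 : ∀ a, (T.graph.deleteEdges {s(u',v')}).Reachable u' a →
        (U.graph.deleteEdges {s(u,v)}).Reachable u (fvv a) := by
      intro a har
      obtain ⟨x0, hx0⟩ := hX₁ne
      obtain ⟨p⟩ := (hX₁Tr x0 hx0).symm.trans har
      refine (hchistep1 p (hX₁Tr x0 hx0)).mp ?_
      rw [hemb.2.1 x0 (hX₁X hx0)]
      exact hX₁Ur x0 hx0
    have hchi2 : ∀ a, (T.graph.deleteEdges {s(u',v')}).Reachable v' a →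
        (U.graph.deleteEdges {s(u,v)}).Reachable v (fvv a) := by
      intro a har
      obtain ⟨y0, hy0⟩ := hX₂ne
      obtain ⟨p⟩ := (hX₂Tr y0 hy0).symm.trans har
      refine (hchistep2 p (hX₂Tr y0 hy0)).mp ?_
      rw [hemb.2.1 y0 (hX₂X hy0)]
      exact hX₂Ur y0 hy0
    have hcrosse : s(u,v) ∈ (fee he').edges := by
      by_contra hno
      have hr := walk_avoid_reach (fee he') hno
      exact hsepU (((hchi1 u' (Reachable.refl _)).trans hr).trans
        (hchi2 v' (Reachable.refl _)).symm)
    obtain ⟨w, z, q0, r0, hor, hq0p, hr0p, hq0e, hr0e, hq0sub, hr0sub, -, -⟩ :=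
      split_at_edge (fee he') (hemb.2.2.2.1 he') hcrosse
    have hworient : w = u ∧ z = v := by
      rcases hor with h1 | ⟨hw1, -⟩
      · exact h1
      · exfalso
        have hr := walk_avoid_reach q0 hq0e
        rw [hw1] at hr
        exact hsepU ((hchi1 u' (Reachable.refl _)).trans hr)
    obtain ⟨hwu, hzv⟩ := hworient
    have hqdisj1 : ∀ ⦃a b : V⦄ (hT : T.graph.Adj a b), s(a,b) ≠ s(u',v') →
        ∀ f ∈ (q0.copy rfl hwu).edges, f ∉ (fee hT).edges := by
      intro a b hT hne f hfq hfT
      rw [Walk.edges_copy] at hfq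
      exact hemb.2.2.2.2 he' hT (fun hh => hne hh.symm) f (hq0sub f hfq) hfT
    have hr0pe : s(u,v) ∉ ((r0.copy hzv rfl).reverse).edges := by
      rw [Walk.edges_reverse, List.mem_reverse, Walk.edges_copy]; exact hr0e
    have hqdisj2 : ∀ ⦃a b : V⦄ (hT : T.graph.Adj a b), s(a,b) ≠ s(u',v') →
        ∀ f ∈ ((r0.copy hzv rfl).reverse).edges, f ∉ (fee hT).edges := by
      intro a b hT hne f hfq hfT
      rw [Walk.edges_reverse, List.mem_reverse, Walk.edges_copy] at hfq
      exact hemb.2.2.2.2 he' hT (fun hh => hne hh.symm) f (hr0sub f hfq) hfT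
    constructor
    · exact construct_forward U T U₁ T₁ X X₁ u u' x₁ s(u,v) s(u',v') fvv fee hemb
        hx₁Uv hx₁Tv hu'T hU₁v hU₁a hT₁v hT₁a hX₁X hXU hchi1 hnc1 (q0.copy rfl hwu)
        (by simpa using hq0p) (by rw [Walk.edges_copy]; exact hq0e) hqdisj1
    · exact construct_forward U T U₂ T₂ X X₂ v v' x₂ s(u,v) s(u',v') fvv fee hemb
        hx₂Uv hx₂Tv hv'T hU₂v hU₂a hT₂v hT₂a hX₂X hXU hchi2 hnc2
        (r0.copy hzv rfl).reverse (by simpa using hr0p.reverse) hr0pe hqdisj2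
  · rintro ⟨⟨fv1, fe1, hemb1⟩, ⟨fv2, fe2, hemb2⟩⟩
    obtain ⟨hfv1, hinj1, hfix1, hedge1, hnew1, Q₁, hQ₁p, hQ₁sub, hQ₁fact, hQ₁supp⟩ :=
      extract_side U T U₁ T₁ X₁ u u' v' x₁ s(u,v) s(u',v') rfl fv1 fe1 hemb1
        hx₁Uv hx₁Tv hu'T huU hsepT hU₁v hU₁a hT₁v hT₁a
    obtain ⟨hfv2, hinj2, hfix2, hedge2, hnew2, Q₂, hQ₂p, hQ₂sub, hQ₂fact, hQ₂supp⟩ :=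
      extract_side U T U₂ T₂ X₂ v v' u' x₂ s(u,v) s(u',v') Sym2.eq_swap fv2 fe2 hemb2
        hx₂Uv hx₂Tv hv'T hvU hsepT' hU₂v hU₂a hT₂v hT₂a
    set fvc : V → V := fun a =>
      if (T.graph.deleteEdges {s(u',v')}).Reachable u' a then fv1 a else fv2 a with hfvcdef
    have hfvc1 : ∀ a, (T.graph.deleteEdges {s(u',v')}).Reachable u' a → fvc a = fv1 a :=
      fun a ha => if_pos ha
    have hfvc2 : ∀ a, ¬ (T.graph.deleteEdges {s(u',v')}).Reachable u' a → fvc a = fv2 a :=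
      fun a ha => if_neg ha
    have hns : ∀ a, (T.graph.deleteEdges {s(u',v')}).Reachable v' a →
        ¬ (T.graph.deleteEdges {s(u',v')}).Reachable u' a :=
      fun a h2 h1 => hsepT (h1.trans h2.symm)
    have hfvc2' : ∀ a, (T.graph.deleteEdges {s(u',v')}).Reachable v' a → fvc a = fv2 a :=
      fun a ha => if_neg (hns a ha)
    have hclass : ∀ ⦃a b : V⦄, T.graph.Adj a b →
        ((T.graph.deleteEdges {s(u',v')}).Reachable u' a ∧
         (T.graph.deleteEdges {s(u',v')}).Reachable u' b) ∨
        ((T.graph.deleteEdges {s(u',v')}).Reachable v' a ∧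
         (T.graph.deleteEdges {s(u',v')}).Reachable v' b) ∨
        (a = u' ∧ b = v') ∨ (a = v' ∧ b = u') := by
      intro a b h
      rcases hdichT a (T.support h).1 with ha | ha
      · by_cases hEq : s(a,b) = s(u',v')
        · rcases Sym2.eq_iff.mp hEq with ⟨h1, h2⟩ | ⟨h1, h2⟩
          · exact Or.inr (Or.inr (Or.inl ⟨h1, h2⟩))
          · rw [h1] at ha
            exact absurd ha hsepT
        · refine Or.inl ⟨ha, ha.trans (SimpleGraph.Adj.reachable ?_)⟩
          rw [SimpleGraph.deleteEdges_adj]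
          exact ⟨h, by simpa using hEq⟩
      · by_cases hEq : s(a,b) = s(u',v')
        · rcases Sym2.eq_iff.mp hEq with ⟨h1, h2⟩ | ⟨h1, h2⟩
          · rw [h1] at ha
            exact absurd ha hsepT'
          · exact Or.inr (Or.inr (Or.inr ⟨h1, h2⟩))
        · refine Or.inr (Or.inl ⟨ha, ha.trans (SimpleGraph.Adj.reachable ?_)⟩)
          rw [SimpleGraph.deleteEdges_adj]
          exact ⟨h, by simpa using hEq⟩
    set wE : U.graph.Walk (fv1 u') (fv2 v') := Q₁.append (Walk.cons huv Q₂.reverse) with hwEdef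
    have hQ₂rsupp : ∀ x ∈ Q₂.reverse.support,
        (U.graph.deleteEdges {s(u,v)}).Reachable v x := by
      intro x hx
      rw [Walk.support_reverse, List.mem_reverse] at hx
      exact hQ₂supp x hx
    have hwEpath : wE.IsPath := by
      rw [hwEdef, Walk.isPath_def, Walk.support_append, Walk.support_cons, List.tail_cons]
      refine List.Nodup.append ((Walk.isPath_def _).mp hQ₁p)
        ((Walk.isPath_def _).mp hQ₂p.reverse) ?_
      intro x hx1 hx2
      exact hsepU ((hQ₁supp x hx1).trans (hQ₂rsupp x hx2).symm)
    have hwEmem : ∀ f ∈ wE.edges, f ∈ Q₁.edges ∨ f = s(u,v) ∨ f ∈ Q₂.edges := by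
      intro f hf
      rw [hwEdef, Walk.edges_append, Walk.edges_cons, Walk.edges_reverse] at hf
      rcases List.mem_append.mp hf with h1 | h1
      · exact Or.inl h1
      · rcases List.mem_cons.mp h1 with h2 | h2
        · exact Or.inr (Or.inl h2)
        · exact Or.inr (Or.inr (List.mem_reverse.mp h2))
    have hrep : ∀ f : Sym2 V, ∃ e1 e2, f = s(e1, e2) :=
      fun f => Sym2.inductionOn f (fun x y => ⟨x, y, rfl⟩)
    have spec : ∀ (a b : V), T.graph.Adj a b → ∃ w : U.graph.Walk (fvc a) (fvc b),
        w.IsPath ∧ ∀ f ∈ w.edges,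
        ((∃ h₁ : T₁.graph.Adj a b, f ∈ (fe1 h₁).edges ∧ (∀ p r : V, f = s(p,r) →
            (U.graph.deleteEdges {s(u,v)}).Reachable u p ∧
            (U.graph.deleteEdges {s(u,v)}).Reachable u r)) ∨
         (∃ h₂ : T₂.graph.Adj a b, f ∈ (fe2 h₂).edges ∧ (∀ p r : V, f = s(p,r) →
            (U.graph.deleteEdges {s(u,v)}).Reachable v p ∧
            (U.graph.deleteEdges {s(u,v)}).Reachable v r)) ∨
         (s(a,b) = s(u',v') ∧
           ((f ∈ (fe1 hnew1).edges ∧ (∀ p r : V, f = s(p,r) →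
              (U.graph.deleteEdges {s(u,v)}).Reachable u p ∧
              (U.graph.deleteEdges {s(u,v)}).Reachable u r)) ∨ f = s(u,v) ∨
            (f ∈ (fe2 hnew2).edges ∧ (∀ p r : V, f = s(p,r) →
              (U.graph.deleteEdges {s(u,v)}).Reachable v p ∧
              (U.graph.deleteEdges {s(u,v)}).Reachable v r))))) := by
      intro a b h
      rcases hclass h with ⟨ha, hb⟩ | ⟨ha, hb⟩ | ⟨hau, hbv⟩ | ⟨hav, hbu⟩
      · obtain ⟨w0, hw0p, ⟨h₁, hw0e⟩, hw0f⟩ := hedge1 h ha hb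
        refine ⟨w0.copy (hfvc1 a ha).symm (hfvc1 b hb).symm, by simpa using hw0p, ?_⟩
        intro f hf
        rw [Walk.edges_copy] at hf
        exact Or.inl ⟨h₁, hw0e ▸ hf, fun p r hfe => hw0f f hf p r hfe⟩
      · obtain ⟨w0, hw0p, ⟨h₂, hw0e⟩, hw0f⟩ := hedge2 h ha hb
        refine ⟨w0.copy (hfvc2' a ha).symm (hfvc2' b hb).symm, by simpa using hw0p, ?_⟩
        intro f hf
        rw [Walk.edges_copy] at hf
        exact Or.inr (Or.inl ⟨h₂, hw0e ▸ hf, fun p r hfe => hw0f f hf p r hfe⟩)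
      · have hea : fvc a = fv1 u' := by rw [hau]; exact hfvc1 u' (Reachable.refl _)
        have heb : fvc b = fv2 v' := by rw [hbv]; exact hfvc2' v' (Reachable.refl _)
        refine ⟨wE.copy hea.symm heb.symm, by simpa using hwEpath, ?_⟩
        intro f hf
        rw [Walk.edges_copy] at hf
        refine Or.inr (Or.inr ⟨by rw [hau, hbv], ?_⟩)
        rcases hwEmem f hf with h1 | h1 | h1
        · exact Or.inl ⟨hQ₁sub f h1, fun p r hfe => hQ₁fact f h1 p r hfe⟩
        · exact Or.inr (Or.inl h1)
        · exact Or.inr (Or.inr ⟨hQ₂sub f h1, fun p r hfe => hQ₂fact f h1 p r hfe⟩)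
      · have hea : fvc a = fv2 v' := by rw [hav]; exact hfvc2' v' (Reachable.refl _)
        have heb : fvc b = fv1 u' := by rw [hbu]; exact hfvc1 u' (Reachable.refl _)
        refine ⟨wE.reverse.copy hea.symm heb.symm, by simpa using hwEpath.reverse, ?_⟩
        intro f hf
        rw [Walk.edges_copy, Walk.edges_reverse, List.mem_reverse] at hf
        refine Or.inr (Or.inr ⟨by rw [hav, hbu]; exact Sym2.eq_swap, ?_⟩)
        rcases hwEmem f hf with h1 | h1 | h1
        · exact Or.inl ⟨hQ₁sub f h1, fun p r hfe => hQ₁fact f h1 p r hfe⟩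
        · exact Or.inr (Or.inl h1)
        · exact Or.inr (Or.inr ⟨hQ₂sub f h1, fun p r hfe => hQ₂fact f h1 p r hfe⟩)
    choose wfun hwp hwspec using spec
    refine ⟨fvc, fun a b h => wfun a b h, ?_, ?_, ?_, fun a b h => hwp a b h, ?_⟩
    · intro a ha
      by_cases hs : (T.graph.deleteEdges {s(u',v')}).Reachable u' a
      · rw [hfvc1 a hs]
        exact (hfv1 a ha hs).1
      · have hs2 := (hdichT a ha).resolve_left hs
        rw [hfvc2 a hs]
        exact (hfv2 a ha hs2).1
    · intro x hx
      rw [← hunion] at hx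
      rcases hx with hx | hx
      · rw [hfvc1 x (hX₁Tr x hx)]
        exact hfix1 x hx
      · rw [hfvc2' x (hX₂Tr x hx)]
        exact hfix2 x hx
    · intro a ha b hb heq
      by_cases hsa : (T.graph.deleteEdges {s(u',v')}).Reachable u' a
      · by_cases hsb : (T.graph.deleteEdges {s(u',v')}).Reachable u' b
        · rw [hfvc1 a hsa, hfvc1 b hsb] at heq
          exact hinj1 a ha hsa b hb hsb heq
        · have hsb2 := (hdichT b hb).resolve_left hsb
          rw [hfvc1 a hsa, hfvc2 b hsb] at heq
          have h2 : (U.graph.deleteEdges {s(u,v)}).Reachable v (fv1 a) := by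
            rw [heq]; exact (hfv2 b hb hsb2).2
          exact absurd ((hfv1 a ha hsa).2.trans h2.symm) hsepU
      · by_cases hsb : (T.graph.deleteEdges {s(u',v')}).Reachable u' b
        · have hsa2 := (hdichT a ha).resolve_left hsa
          rw [hfvc2 a hsa, hfvc1 b hsb] at heq
          have h2 : (U.graph.deleteEdges {s(u,v)}).Reachable v (fv1 b) := by
            rw [← heq]; exact (hfv2 a ha hsa2).2
          exact absurd ((hfv1 b hb hsb).2.trans h2.symm) hsepU
        · have hsa2 := (hdichT a ha).resolve_left hsa
          have hsb2 := (hdichT b hb).resolve_left hsb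
          rw [hfvc2 a hsa, hfvc2 b hsb] at heq
          exact hinj2 a ha hsa2 b hb hsb2 heq
    · intro a b c d h h' hne f hf hf'
      have hne1 : s(a,b) ≠ s(u',x₁) := by
        intro heq
        rcases Sym2.eq_iff.mp heq with ⟨-, h2⟩ | ⟨h1, -⟩
        · exact hx₁Tv (h2 ▸ (T.support h).2)
        · exact hx₁Tv (h1 ▸ (T.support h).1)
      have hne2 : s(a,b) ≠ s(v',x₂) := by
        intro heq
        rcases Sym2.eq_iff.mp heq with ⟨-, h2⟩ | ⟨h1, -⟩
        · exact hx₂Tv (h2 ▸ (T.support h).2)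
        · exact hx₂Tv (h1 ▸ (T.support h).1)
      have hne1' : s(c,d) ≠ s(u',x₁) := by
        intro heq
        rcases Sym2.eq_iff.mp heq with ⟨-, h2⟩ | ⟨h1, -⟩
        · exact hx₁Tv (h2 ▸ (T.support h').2)
        · exact hx₁Tv (h1 ▸ (T.support h').1)
      have hne2' : s(c,d) ≠ s(v',x₂) := by
        intro heq
        rcases Sym2.eq_iff.mp heq with ⟨-, h2⟩ | ⟨h1, -⟩
        · exact hx₂Tv (h2 ▸ (T.support h').2)
        · exact hx₂Tv (h1 ▸ (T.support h').1)
      have hmix : ∀ g : Sym2 V,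
          (∀ p r : V, g = s(p,r) → (U.graph.deleteEdges {s(u,v)}).Reachable u p ∧
            (U.graph.deleteEdges {s(u,v)}).Reachable u r) →
          (∀ p r : V, g = s(p,r) → (U.graph.deleteEdges {s(u,v)}).Reachable v p ∧
            (U.graph.deleteEdges {s(u,v)}).Reachable v r) → False := by
        intro g f1 f2
        obtain ⟨p, r, rfl⟩ := hrep g
        exact hsepU ((f1 p r rfl).1.trans ((f2 p r rfl).1).symm)
      have hEu : (∀ p r : V, s(u,v) = s(p,r) →
          (U.graph.deleteEdges {s(u,v)}).Reachable u p ∧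
          (U.graph.deleteEdges {s(u,v)}).Reachable u r) → False :=
        fun hfact => hsepU (hfact u v rfl).2
      have hEv : (∀ p r : V, s(u,v) = s(p,r) →
          (U.graph.deleteEdges {s(u,v)}).Reachable v p ∧
          (U.graph.deleteEdges {s(u,v)}).Reachable v r) → False :=
        fun hfact => hsepU ((hfact u v rfl).1).symm
      rcases hwspec a b h f hf with ⟨h₁, hfe, hfact⟩ | ⟨h₂, hfe, hfact⟩ | ⟨hsym, hcase⟩ <;>
        rcases hwspec c d h' f hf' with ⟨h₁', hfe', hfact'⟩ | ⟨h₂', hfe', hfact'⟩ | ⟨hsym', hcase'⟩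
      · exact hemb1.2.2.2.2 h₁ h₁' hne f hfe hfe'
      · exact hmix f hfact hfact'
      · rcases hcase' with ⟨hq, -⟩ | hE | ⟨hq, hfq⟩
        · exact hemb1.2.2.2.2 h₁ hnew1 hne1 f hfe hq
        · exact hEu (hE ▸ hfact)
        · exact hmix f hfact hfq
      · exact hmix f hfact' hfact
      · exact hemb2.2.2.2.2 h₂ h₂' hne f hfe hfe'
      · rcases hcase' with ⟨hq, hfq⟩ | hE | ⟨hq, -⟩
        · exact hmix f hfq hfact
        · exact hEv (hE ▸ hfact)
        · exact hemb2.2.2.2.2 h₂ hnew2 hne2 f hfe hq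
      · rcases hcase with ⟨hq, -⟩ | hE | ⟨hq, hfq⟩
        · exact hemb1.2.2.2.2 hnew1 h₁' (fun hh => hne1' hh.symm) f hq hfe'
        · exact hEu (hE ▸ hfact')
        · exact hmix f hfact' hfq
      · rcases hcase with ⟨hq, hfq⟩ | hE | ⟨hq, -⟩
        · exact hmix f hfq hfact'
        · exact hEv (hE ▸ hfact')
        · exact hemb2.2.2.2.2 hnew2 h₂' (fun hh => hne2' hh.symm) f hq hfe'
      · exact hne (hsym.trans hsym'.symm)
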